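/- arXiv:1601.02267 — 2 statements merged into one kernel-verified Lean document; each statement's English description precedes it below -/
import Mathlib

section
/- Let G be a bipartite graph in which every connected component has at least 3 vertices. Then for every integer t ≥ 3, G admits an improper twin t-edge coloring. -/
open Finset

-- The vertex label induced by an edge coloring: `twinLabel G s v = Σ_{e ∈ E_v} s e` in `ZMod k`.
open scoped Classical in
noncomputable def twinLabel {V : Type*} [Fintype V] (G : SimpleGraph V) {k : ℕ}
    (s : Sym2 V → ZMod k) (v : V) : ZMod k :=
  ∑ e ∈ G.incidenceFinset v, s e

/-- `s` is an improper twin `k`-edge coloring of `G`: the induced vertex labeling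
is a proper vertex coloring. -/
def IsImproperTwin {V : Type*} [Fintype V] (G : SimpleGraph V) (k : ℕ)
    (s : Sym2 V → ZMod k) : Prop :=
  ∀ ⦃u v : V⦄, G.Adj u v → twinLabel G s u ≠ twinLabel G s v

/-- The improper twin chromatic index: the least `k ≥ 2` admitting an improper twin
`k`-edge coloring. -/
noncomputable def improperTwinIndex {V : Type*} [Fintype V] (G : SimpleGraph V) : ℕ :=
  sInf {k | 2 ≤ k ∧ ∃ s : Sym2 V → ZMod k, IsImproperTwin G k s}

section aux
variable {V : Type*} [Fintype V] {t : ℕ} (G : SimpleGraph V)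

lemma twinLabel_sum {ι : Type*} (F : Finset ι) (s : ι → Sym2 V → ZMod t) (v : V) :
    twinLabel G (∑ i ∈ F, s i) v = ∑ i ∈ F, twinLabel G (s i) v := by
  simp only [twinLabel, Finset.sum_apply]
  exact Finset.sum_comm

lemma twinLabel_add (s1 s2 : Sym2 V → ZMod t) (v : V) :
    twinLabel G (s1 + s2) v = twinLabel G s1 v + twinLabel G s2 v := by
  simp [twinLabel, Finset.sum_add_distrib]

open scoped Classical in
lemma twinLabel_singleEdge {u v : V} (h : G.Adj u v) (a : ZMod t) :
    twinLabel G (fun e => if e = s(u,v) then a else 0) = Pi.single u a + Pi.single v a := by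
  classical
  funext w
  have hmem : (s(u,v) ∈ G.incidenceFinset w) ↔ (w = u ∨ w = v) := by
    rw [SimpleGraph.mem_incidenceFinset, SimpleGraph.mk'_mem_incidenceSet_iff]
    exact ⟨fun h' => h'.2, fun h' => ⟨h, h'⟩⟩
  have : twinLabel G (fun e => if e = s(u,v) then a else 0) w
      = if s(u,v) ∈ G.incidenceFinset w then a else 0 := by
    simp [twinLabel]
  rw [this]
  have hne : u ≠ v := h.ne
  by_cases hu : w = u <;> by_cases hv : w = v <;>
    simp [Pi.single_apply, hu, hv, hmem, hne] <;> tauto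

open scoped Classical in
lemma exists_walk_label {u v : V} (p : G.Walk u v) (a : ZMod t) :
    ∃ s : Sym2 V → ZMod t,
      twinLabel G s = Pi.single u a + Pi.single v ((-1) ^ (p.length + 1) * a) := by
  induction p generalizing a with
  | nil =>
    refine ⟨0, ?_⟩
    funext w
    simp only [twinLabel, Pi.zero_apply, Pi.add_apply, Pi.single_apply, SimpleGraph.Walk.length_nil, pow_one, zero_add]
    rw [Finset.sum_const_zero]
    split <;> ring
  | @cons u w' v h p ih =>
    obtain ⟨s', hs'⟩ := ih (-a)
    refine ⟨(fun e => if e = s(u,w') then a else 0) + s', ?_⟩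
    funext x
    rw [twinLabel_add, hs', twinLabel_singleEdge G h]
    simp only [SimpleGraph.Walk.length_cons, Pi.add_apply, Pi.single_apply]
    have h1 : ((-1 : ZMod t)) ^ (p.length + 1) * (-a) = (-1) ^ (p.length + 1 + 1) * a := by
      ring
    rw [h1]
    by_cases h2 : x = w' <;> simp [h2] <;> ring

lemma walk_parity (col : G.Coloring (Fin 2)) {u v : V} (p : G.Walk u v) :
    col u = col v ↔ Even p.length := by
  induction p with
  | nil => simp
  | @cons u w' v h p ih =>
    have hne : col u ≠ col w' := col.valid h
    have key : ∀ x y z : Fin 2, x ≠ y → (x = z ↔ ¬ y = z) := by decide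
    rw [SimpleGraph.Walk.length_cons, Nat.even_add_one, ← ih, key _ _ _ hne]

open scoped Classical in
lemma exists_pair_odd (col : G.Coloring (Fin 2)) {u v : V} (hr : G.Reachable u v)
    (hne : col u ≠ col v) (a : ZMod t) :
    ∃ s : Sym2 V → ZMod t, twinLabel G s = Pi.single u a + Pi.single v a := by
  obtain ⟨p⟩ := hr
  obtain ⟨s, hs⟩ := exists_walk_label G p a
  refine ⟨s, ?_⟩
  rw [hs]
  have hodd : ¬ Even p.length := fun h => hne ((walk_parity G col p).2 h)
  have : Even (p.length + 1) := Nat.even_add_one.2 hodd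
  rw [this.neg_one_pow, one_mul]

open scoped Classical in
lemma exists_pair_even (col : G.Coloring (Fin 2)) {u v : V} (hr : G.Reachable u v)
    (heq : col u = col v) (a : ZMod t) :
    ∃ s : Sym2 V → ZMod t, twinLabel G s = Pi.single u a + Pi.single v (-a) := by
  obtain ⟨p⟩ := hr
  obtain ⟨s, hs⟩ := exists_walk_label G p a
  refine ⟨s, ?_⟩
  rw [hs]
  have heven : Even p.length := (walk_parity G col p).1 heq
  have : Odd (p.length + 1) := Even.add_one heven
  rw [this.neg_one_pow, neg_one_mul]

end aux

lemma zmod_facts {t : ℕ} (ht : 3 ≤ t) :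
    (1 : ZMod t) ≠ 0 ∧ (2 : ZMod t) ≠ 0 ∧ (2 : ZMod t) ≠ 1 ∧ (3 : ZMod t) ≠ 1 ∧
      (3 : ZMod t) ≠ 2 ∧ (1 : ZMod t) ≠ -1 := by
  haveI : NeZero t := ⟨by omega⟩
  have key : ∀ a : ℕ, 0 < a → a < 3 → (a : ZMod t) ≠ 0 := by
    intro a ha ha3 h
    have := (ZMod.natCast_eq_zero_iff a t).1 h
    have := Nat.le_of_dvd ha this
    omega
  have h10 : (1 : ZMod t) ≠ 0 := by simpa using key 1 (by omega) (by omega)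
  have h20 : (2 : ZMod t) ≠ 0 := by simpa using key 2 (by omega) (by omega)
  refine ⟨h10, h20, fun h => h10 (by linear_combination h), fun h => h20 (by linear_combination h),
    fun h => h10 (by linear_combination h), fun h => h20 (by linear_combination h)⟩

open scoped Classical in
lemma percomp {V : Type*} [Fintype V] (G : SimpleGraph V) (col : G.Coloring (Fin 2))
    {t : ℕ} (ht : 3 ≤ t) (r : V)
    (h3 : 3 ≤ (G.connectedComponentMk r).supp.ncard) :
    ∃ s : Sym2 V → ZMod t,
      (∀ v, G.connectedComponentMk v ≠ G.connectedComponentMk r → twinLabel G s v = 0) ∧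
      (∀ ⦃u v⦄, G.Adj u v → G.connectedComponentMk u = G.connectedComponentMk r →
        twinLabel G s u ≠ twinLabel G s v) := by
  haveI : NeZero t := ⟨by omega⟩
  obtain ⟨h10, h20, h21, h31, h32, h1m1⟩ := zmod_facts (t := t) ht
  set C := G.connectedComponentMk r with hC
  set F : Finset V := univ.filter (fun v => G.connectedComponentMk v = C) with hFdef
  set B : Finset V := F.filter (fun v => ¬ col v = col r) with hBdef
  have hmemB : ∀ v, v ∈ B ↔ (G.connectedComponentMk v = C ∧ col v ≠ col r) := by
    intro v; simp [hBdef, hFdef]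
  have hreach : ∀ b, G.connectedComponentMk b = C → G.Reachable b r :=
    fun b hb => SimpleGraph.ConnectedComponent.exact (hb.trans hC)
  have hrB : r ∉ B := fun h => ((hmemB r).1 h).2 rfl
  have hfin2 : ∀ x y z : Fin 2, x ≠ y → x ≠ z → y = z := by decide
  -- reduction of properness to B-side vertices
  have key : ∀ (s : Sym2 V → ZMod t),
      (∀ x, G.connectedComponentMk x = C → col x ≠ col r →
        ∀ y, G.Adj x y → twinLabel G s x ≠ twinLabel G s y) →
      (∀ ⦃u v⦄, G.Adj u v → G.connectedComponentMk u = C →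
        twinLabel G s u ≠ twinLabel G s v) := by
    intro s h u v huv hu
    have hv : G.connectedComponentMk v = C :=
      (SimpleGraph.ConnectedComponent.sound huv.reachable).symm.trans hu
    have hcol : col u ≠ col v := col.valid huv
    by_cases hcu : col u = col r
    · have hcv : col v ≠ col r := fun h' => hcol (hcu.trans h'.symm)
      exact (h v hv hcv u huv.symm).symm
    · exact h u hu hcu v huv
  rcases Nat.lt_or_ge B.card 2 with hcard | hcard
  · rcases Nat.lt_or_ge B.card 1 with hcard0 | hcard1
    · -- B empty
      have hBempty : B = ∅ := Finset.card_eq_zero.1 (by omega)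
      refine ⟨0, fun v _ => by simp [twinLabel], key 0 ?_⟩
      intro x hxC hcx y _
      exact absurd ((hmemB x).2 ⟨hxC, hcx⟩) (by simp [hBempty])
    · -- B = {b}
      have hB1 : B.card = 1 := by omega
      obtain ⟨b, hb⟩ := Finset.card_eq_one.1 hB1
      have hbB : b ∈ B := hb ▸ Finset.mem_singleton_self b
      have hbC : G.connectedComponentMk b = C := ((hmemB b).1 hbB).1
      have hbcol : col b ≠ col r := ((hmemB b).1 hbB).2
      -- the other side has at least 2 vertices
      set A : Finset V := F.filter (fun v => col v = col r) with hAdef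
      have hsplit : A.card + B.card = F.card :=
        Finset.card_filter_add_card_filter_not (fun v => col v = col r)
      have hFsupp : C.supp.toFinset = F := by
        ext v; simp [hFdef, SimpleGraph.ConnectedComponent.mem_supp_iff]
      have hFcard : 3 ≤ F.card := by
        rwa [Set.ncard_eq_toFinset_card', hFsupp] at h3
      have hA2 : 1 < A.card := by omega
      obtain ⟨a1, ha1A, ha1r⟩ := Finset.exists_mem_ne hA2 r
      have ha1C : G.connectedComponentMk a1 = C :=
        (Finset.mem_filter.1 ((Finset.mem_filter.1 ha1A).1)).2
      have ha1col : col a1 = col r := (Finset.mem_filter.1 ha1A).2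
      obtain ⟨s1, hs1⟩ := exists_pair_odd G col (hreach b hbC) hbcol (1 : ZMod t)
      obtain ⟨s2, hs2⟩ := exists_pair_even G col
        ((hreach a1 ha1C).symm) (ha1col.symm) (1 : ZMod t)
      have hbr : b ≠ r := fun h => hbcol (h ▸ rfl)
      have hba1 : b ≠ a1 := fun h => hbcol (h ▸ ha1col)
      have hlab : ∀ w, twinLabel G (s1 + s2) w =
          (if w = b then 1 else 0) + (if w = r then 1 else 0)
          + ((if w = r then 1 else 0) + (if w = a1 then (-1 : ZMod t) else 0)) := by
        intro w
        rw [twinLabel_add, hs1, hs2]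
        simp [Pi.single_apply]
      refine ⟨s1 + s2, ?_, key _ ?_⟩
      · intro v hv
        have hvb : v ≠ b := fun h => hv (h ▸ hbC)
        have hvr : v ≠ r := fun h => hv (h ▸ hC.symm)
        have hva1 : v ≠ a1 := fun h => hv (h ▸ ha1C)
        rw [hlab]
        simp [hvb, hvr, hva1]
      · intro x hxC hcx y hxy
        have hxb : x = b := by
          have := (hmemB x).2 ⟨hxC, hcx⟩
          rw [hb] at this; exact Finset.mem_singleton.1 this
        subst hxb
        have hyb : y ≠ x := (G.ne_of_adj hxy).symm
        rw [hlab, hlab]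
        rw [if_pos rfl, if_neg hbr, if_neg hba1, if_neg hyb]
        simp only [add_zero, zero_add]
        by_cases hyr : y = r
        · have hya1 : y ≠ a1 := fun h => ha1r (h ▸ hyr)
          rw [if_pos hyr, if_neg hya1]
          intro h
          exact h21 (by linear_combination -h)
        · rw [if_neg hyr]
          by_cases hya1 : y = a1
          · rw [if_pos hya1]
            simpa using h1m1
          · rw [if_neg hya1]
            simpa using h10
  · -- B.card ≥ 2
    have main : ∀ a : V → ZMod t, (∀ b ∈ B, a b ≠ 0) →
        (∀ b ∈ B, (∑ x ∈ B, a x) ≠ a b) →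
        ∃ s : Sym2 V → ZMod t,
          (∀ v, G.connectedComponentMk v ≠ C → twinLabel G s v = 0) ∧
          (∀ ⦃u v⦄, G.Adj u v → G.connectedComponentMk u = C →
            twinLabel G s u ≠ twinLabel G s v) := by
      intro a h0 hS
      set f : V → (Sym2 V → ZMod t) := fun b =>
        if hb : b ∈ B then
          Classical.choose (exists_pair_odd G col (hreach b ((hmemB b).1 hb).1)
            ((hmemB b).1 hb).2 (a b))
        else 0 with hfdef
      have hf : ∀ b ∈ B, twinLabel G (f b) = Pi.single b (a b) + Pi.single r (a b) := by
        intro b hb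
        rw [hfdef]
        simp only [dif_pos hb]
        exact Classical.choose_spec (exists_pair_odd G col (hreach b ((hmemB b).1 hb).1)
            ((hmemB b).1 hb).2 (a b))
      set s : Sym2 V → ZMod t := ∑ b ∈ B, f b with hsdef
      have hlab : ∀ w, twinLabel G s w =
          (if w ∈ B then a w else 0) + (if w = r then ∑ x ∈ B, a x else 0) := by
        intro w
        rw [hsdef, twinLabel_sum]
        rw [Finset.sum_congr rfl (fun b hb => by rw [hf b hb])]
        simp only [Pi.add_apply, Finset.sum_add_distrib, Pi.single_apply]
        congr 1
        · exact Finset.sum_ite_eq B w a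
        · by_cases hwr : w = r <;> simp [hwr]
      refine ⟨s, ?_, key s ?_⟩
      · intro v hv
        have hvB : v ∉ B := fun h => hv ((hmemB v).1 h).1
        have hvr : v ≠ r := fun h => hv (h ▸ hC.symm)
        rw [hlab]; simp [hvB, hvr]
      · intro x hxC hcx y hxy
        have hxB : x ∈ B := (hmemB x).2 ⟨hxC, hcx⟩
        have hxr : x ≠ r := fun h => hcx (h ▸ rfl)
        have hycol : col y = col r := hfin2 _ _ _ (col.valid hxy) hcx
        have hyB : y ∉ B := fun h => ((hmemB y).1 h).2 hycol
        rw [hlab, hlab]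
        rw [if_pos hxB, if_neg hxr, if_neg hyB, add_zero, zero_add]
        by_cases hyr : y = r
        · rw [if_pos hyr]; exact fun h => hS x hxB h.symm
        · rw [if_neg hyr]; exact h0 x hxB
    by_cases hm1 : ((B.card : ℕ) : ZMod t) = 1
    · have hcard1 : (1:ℕ) < B.card := by omega
      obtain ⟨b1, b2, hb1, hb2, hb12⟩ := Finset.one_lt_card_iff.1 hcard1
      have hsum : (∑ x ∈ B, ((1:ZMod t) + (if x = b1 then 1 else 0)
          + (if x = b2 then 1 else 0))) = 3 := by
        rw [Finset.sum_add_distrib, Finset.sum_add_distrib, Finset.sum_const,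
          Finset.sum_ite_eq' B b1 (fun _ => (1:ZMod t)),
          Finset.sum_ite_eq' B b2 (fun _ => (1:ZMod t)), if_pos hb1, if_pos hb2,
          nsmul_eq_mul, mul_one, hm1]
        ring
      have hval : ∀ b, ((1:ZMod t) + (if b = b1 then 1 else 0) + (if b = b2 then 1 else 0)) = 1
          ∨ ((1:ZMod t) + (if b = b1 then 1 else 0) + (if b = b2 then 1 else 0)) = 2 := by
        intro b
        by_cases h1 : b = b1
        · right; rw [if_pos h1, if_neg (h1 ▸ hb12)]; ring
        · by_cases h2 : b = b2
          · right; rw [if_neg h1, if_pos h2]; ring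
          · left; rw [if_neg h1, if_neg h2]; ring
      refine main (fun v => 1 + (if v = b1 then 1 else 0) + (if v = b2 then 1 else 0)) ?_ ?_
      · intro b _
        beta_reduce
        rcases hval b with h | h <;> rw [h]
        · exact h10
        · exact h20
      · intro b _
        beta_reduce
        rw [hsum]
        rcases hval b with h | h <;> rw [h]
        · exact h31
        · exact h32
    · refine main (fun _ => 1) (fun b _ => h10) ?_
      intro b _
      rw [Finset.sum_const, nsmul_eq_mul, mul_one]
      exact hm1


theorem stmt_3 {V : Type*} [Fintype V] (G : SimpleGraph V)
    (hbip : G.Colorable 2)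
    (hnice : ∀ v : V, 3 ≤ (G.connectedComponentMk v).supp.ncard)
    (t : ℕ) (ht : 3 ≤ t) :
    ∃ s : Sym2 V → ZMod t, IsImproperTwin G t s := by
  classical
  obtain ⟨col⟩ := hbip
  haveI : Fintype G.ConnectedComponent := Quotient.fintype G.reachableSetoid
  have hrep : ∀ C : G.ConnectedComponent, ∃ v, G.connectedComponentMk v = C :=
    fun C => C.exists_rep
  choose rep hrep' using hrep
  choose S hP1 hP2 using fun C : G.ConnectedComponent =>
    percomp G col ht (rep C) (hnice (rep C))
  refine ⟨∑ C : G.ConnectedComponent, S C, ?_⟩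
  intro u v huv
  have hcompv : G.connectedComponentMk v = G.connectedComponentMk u :=
    (SimpleGraph.ConnectedComponent.sound huv.reachable).symm
  have hlab : ∀ w, G.connectedComponentMk w = G.connectedComponentMk u →
      twinLabel G (∑ C : G.ConnectedComponent, S C) w
        = twinLabel G (S (G.connectedComponentMk u)) w := by
    intro w hw
    rw [twinLabel_sum]
    apply Finset.sum_eq_single_of_mem _ (Finset.mem_univ _)
    intro C _ hCne
    apply hP1 C w
    rw [hrep' C, hw]
    exact fun h => hCne h.symm
  rw [hlab u rfl, hlab v hcompv]
  exact hP2 (G.connectedComponentMk u) huv (hrep' _).symm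
end

section
/- Let G be a connected non-bipartite graph on at least 3 vertices and t an even integer with t ≥ χ(G) ≥ 3. A proper t-vertex coloring f of G with colors in {0, ..., t−1} is induced by an improper twin t-edge coloring of G if and only if Σ_{v ∈ V(G)} f(v) is even. -/
open Finset

section Aux

variable {V : Type*} [Fintype V] {t : ℕ} {G : SimpleGraph V}

def Ind (G : SimpleGraph V) (t : ℕ) (g : V → ZMod t) : Prop :=
  ∃ s : Sym2 V → ZMod t, ∀ u, twinLabel G s u = g u

lemma Ind.add {g1 g2 : V → ZMod t} (h1 : Ind G t g1) (h2 : Ind G t g2) :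
    Ind G t (g1 + g2) := by
  obtain ⟨s1, hs1⟩ := h1
  obtain ⟨s2, hs2⟩ := h2
  refine ⟨s1 + s2, fun u => ?_⟩
  rw [Pi.add_apply, ← hs1 u, ← hs2 u]
  simp [twinLabel, Finset.sum_add_distrib]

lemma Ind.zero : Ind G t 0 := ⟨0, fun u => by simp [twinLabel]⟩

open scoped Classical in
lemma Ind.edge {u v : V} (h : G.Adj u v) (a : ZMod t) :
    Ind G t (Pi.single u a + Pi.single v a) := by
  refine ⟨fun e => if e = s(u, v) then a else 0, fun w => ?_⟩
  rw [twinLabel, Finset.sum_ite_eq' (G.incidenceFinset w) (s(u,v)) (fun _ => a)]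
  by_cases hw : s(u, v) ∈ G.incidenceFinset w
  · rw [if_pos hw]
    rw [SimpleGraph.mem_incidenceFinset, SimpleGraph.mk'_mem_incidenceSet_iff] at hw
    obtain ⟨-, h1 | h2⟩ := hw
    · subst h1; simp [Pi.single_apply, h.ne]
    · subst h2; simp [Pi.single_apply, h.ne']
  · rw [if_neg hw]
    rw [SimpleGraph.mem_incidenceFinset, SimpleGraph.mk'_mem_incidenceSet_iff] at hw
    push_neg at hw
    have := hw h
    simp [Pi.single_apply, this.1, this.2]

lemma Ind.neg {g : V → ZMod t} (h : Ind G t g) : Ind G t (-g) := by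
  obtain ⟨s, hs⟩ := h
  refine ⟨-s, fun u => ?_⟩
  rw [Pi.neg_apply, ← hs u]
  simp [twinLabel]

open scoped Classical in
lemma Ind.walk {u v : V} (p : G.Walk u v) (a b : ZMod t)
    (hb : b = (-1 : ZMod t) ^ (p.length + 1) * a) :
    Ind G t (Pi.single u a + Pi.single v b) := by
  subst hb
  induction p generalizing a with
  | nil =>
    have h0 : Ind G t (0 : V → ZMod t) := Ind.zero
    convert h0 using 1
    funext y
    simp only [Pi.add_apply, Pi.single_apply, SimpleGraph.Walk.length_nil, Pi.zero_apply]
    split_ifs <;> ring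
  | @cons u x v h q ih =>
    have h3 := (Ind.edge h a).add (ih (-a))
    convert h3 using 1
    funext y
    simp only [Pi.add_apply, Pi.single_apply, SimpleGraph.Walk.length_cons, pow_succ]
    split_ifs <;> ring

lemma odd_closed_walk (hG : G.Connected) (hnb : ¬ G.Colorable 2) :
    ∃ (x : V) (p : G.Walk x x), Odd p.length := by
  by_contra hcon
  push_neg at hcon
  apply hnb
  have hne : Nonempty V := hG.nonempty
  obtain ⟨r⟩ := hne
  have hreach : ∀ v, Nonempty (G.Walk r v) := fun v => (hG.preconnected r v)
  classical
  let c : V → ZMod 2 := fun v => ((hreach v).some.length : ZMod 2)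
  have hproper : ∀ ⦃u v : V⦄, G.Adj u v → c u ≠ c v := by
    intro u v huv hcuv
    have hclosed : Odd (((hreach u).some.append
        (SimpleGraph.Walk.cons huv (hreach v).some.reverse)).length) := by
      rw [SimpleGraph.Walk.length_append, SimpleGraph.Walk.length_cons,
        SimpleGraph.Walk.length_reverse]
      have h2 : ((hreach u).some.length : ZMod 2) = ((hreach v).some.length : ZMod 2) := hcuv
      rw [ZMod.natCast_eq_natCast_iff] at h2
      have h2' : (hreach u).some.length % 2 = (hreach v).some.length % 2 := h2
      rw [Nat.odd_iff]
      omega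
    exact (hcon r _) hclosed
  have : G.Coloring (ZMod 2) := SimpleGraph.Coloring.mk c (fun {u v} h => hproper h)
  have hcol := this.colorable
  rwa [ZMod.card 2] at hcol

lemma exists_odd_loop (hG : G.Connected)
    (hodd : ∃ (x : V) (p : G.Walk x x), Odd p.length) (v : V) :
    ∃ p : G.Walk v v, Odd p.length := by
  obtain ⟨x, p, hp⟩ := hodd
  have q : G.Walk v x := (hG.preconnected v x).some
  refine ⟨q.append (p.append q.reverse), ?_⟩
  rw [SimpleGraph.Walk.length_append, SimpleGraph.Walk.length_append,
    SimpleGraph.Walk.length_reverse]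
  rw [Nat.odd_iff] at hp ⊢
  omega

lemma exists_even_walk (hG : G.Connected)
    (hodd : ∃ (x : V) (p : G.Walk x x), Odd p.length) (u v : V) :
    ∃ q : G.Walk u v, Even q.length := by
  have q : G.Walk u v := (hG.preconnected u v).some
  by_cases hq : Even q.length
  · exact ⟨q, hq⟩
  · obtain ⟨l, hl⟩ := exists_odd_loop hG hodd v
    refine ⟨q.append l, ?_⟩
    rw [SimpleGraph.Walk.length_append]
    rw [Nat.odd_iff] at hl
    rw [Nat.even_iff] at hq ⊢
    omega

open scoped Classical in
lemma Ind.sub (hG : G.Connected)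
    (hodd : ∃ (x : V) (p : G.Walk x x), Odd p.length) (u v : V) (a : ZMod t) :
    Ind G t (Pi.single u a + Pi.single v (-a)) := by
  obtain ⟨q, hq⟩ := exists_even_walk hG hodd u v
  refine Ind.walk q a (-a) ?_
  rw [Odd.neg_one_pow (by rw [Nat.even_iff] at hq; rw [Nat.odd_iff]; omega)]
  ring

open scoped Classical in
lemma Ind.double (hG : G.Connected)
    (hodd : ∃ (x : V) (p : G.Walk x x), Odd p.length) (u : V) (a : ZMod t) :
    Ind G t (Pi.single u (2 * a)) := by
  obtain ⟨l, hl⟩ := exists_odd_loop hG hodd u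
  have h := Ind.walk l a a (by
    rw [Even.neg_one_pow (by rw [Nat.odd_iff] at hl; rw [Nat.even_iff]; omega)]
    ring)
  have he : (Pi.single u a + Pi.single u a : V → ZMod t) = Pi.single u (2 * a) := by
    rw [← Pi.single_add]
    ring_nf
  rwa [he] at h

lemma Ind.sum {ι : Type*} (F : Finset ι) (g : ι → V → ZMod t)
    (h : ∀ i ∈ F, Ind G t (g i)) : Ind G t (∑ i ∈ F, g i) :=
  Finset.sum_induction g _ (fun _ _ ha hb => ha.add hb) Ind.zero h

open scoped Classical in
lemma sum_twinLabel (s : Sym2 V → ZMod t) :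
    ∑ v : V, twinLabel G s v = 2 * ∑ e ∈ G.edgeFinset, s e := by
  have key : ∀ v : V, twinLabel G s v = ∑ e ∈ G.edgeFinset, if v ∈ e then s e else 0 := by
    intro v
    rw [twinLabel, SimpleGraph.incidenceFinset_eq_filter, Finset.sum_filter]
  rw [Finset.sum_congr rfl (fun v _ => key v), Finset.sum_comm]
  rw [Finset.mul_sum]
  refine Finset.sum_congr rfl (fun e he => ?_)
  rw [SimpleGraph.mem_edgeFinset] at he
  induction e with
  | h a b =>
    have hab : a ≠ b := ((G.mem_edgeSet).mp he).ne
    have hfil : (Finset.univ.filter (· ∈ s(a, b))) = {a, b} := by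
      ext y; simp [Sym2.mem_iff]
    calc ∑ v : V, (if v ∈ s(a, b) then s s(a, b) else 0)
        = ∑ v ∈ Finset.univ.filter (· ∈ s(a, b)), s s(a, b) := by
          rw [Finset.sum_filter]
      _ = 2 * s s(a, b) := by
          rw [hfil, Finset.sum_pair hab, two_mul]

end Aux

theorem stmt_6 {V : Type*} [Fintype V] (G : SimpleGraph V) (hG : G.Connected)
    (h3 : 3 ≤ Fintype.card V) (hnb : ¬ G.Colorable 2)
    (t : ℕ) (hte : Even t)
    (hχ3 : 3 ≤ G.chromaticNumber) (htχ : G.chromaticNumber ≤ (t : ℕ∞))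
    (f : V → ZMod t) (hf : ∀ ⦃u w : V⦄, G.Adj u w → f u ≠ f w) :
    (∃ s : Sym2 V → ZMod t, ∀ u : V, twinLabel G s u = f u) ↔
      Even (∑ v : V, (f v).val) := by
  classical
  have ht3 : 3 ≤ t := by exact_mod_cast le_trans hχ3 htχ
  haveI : NeZero t := ⟨by omega⟩
  have h2t : 2 ∣ t := hte.two_dvd
  have hodd := odd_closed_walk hG hnb
  have hcast : ((∑ v : V, (f v).val : ℕ) : ZMod t) = ∑ v : V, f v := by
    rw [Nat.cast_sum]
    exact Finset.sum_congr rfl (fun v _ => ZMod.natCast_rightInverse (f v))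
  constructor
  · rintro ⟨s, hs⟩
    have h1 : ∑ v : V, f v = 2 * ∑ e ∈ G.edgeFinset, s e := by
      rw [← sum_twinLabel s]
      exact Finset.sum_congr rfl (fun v _ => (hs v).symm)
    set Y := ∑ e ∈ G.edgeFinset, s e with hY
    have h3' : ((2 * Y.val : ℕ) : ZMod t) = 2 * Y := by
      push_cast
      rw [ZMod.natCast_rightInverse Y]
    have h4 : ((∑ v : V, (f v).val : ℕ) : ZMod t) = ((2 * Y.val : ℕ) : ZMod t) := by
      rw [hcast, h3', h1]
    rw [ZMod.natCast_eq_natCast_iff] at h4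
    have h5 := h4.of_dvd h2t
    have : (∑ v : V, (f v).val) % 2 = (2 * Y.val) % 2 := h5
    rw [Nat.even_iff]
    omega
  · rintro ⟨m, hm⟩
    have w : V := hG.nonempty.some
    have hdouble : Ind G t (Pi.single w (((∑ v : V, (f v).val : ℕ) : ZMod t))) := by
      have : (((∑ v : V, (f v).val : ℕ) : ZMod t)) = 2 * (m : ZMod t) := by
        rw [hm]; push_cast; ring
      rw [this]
      exact Ind.double hG hodd w (m : ZMod t)
    have hsum : Ind G t (∑ v : V, (Pi.single v (f v) + Pi.single w (-(f v)))) :=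
      Ind.sum Finset.univ _ (fun v _ => Ind.sub hG hodd v w (f v))
    have htot := hsum.add hdouble
    have hdecomp : (∑ v : V, (Pi.single v (f v) + Pi.single w (-(f v)))) +
        Pi.single w (((∑ v : V, (f v).val : ℕ) : ZMod t)) = f := by
      funext y
      simp only [Pi.add_apply, Finset.sum_apply, Pi.single_apply, hcast,
        Finset.sum_add_distrib]
      rw [Finset.sum_ite_eq Finset.univ y f]
      by_cases hy : y = w
      · subst hy
        simp
      · simp [hy]
    rwa [hdecomp] at htot
end
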